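/- Let Ω = {i_1, i_2} ⊂ ℤ_d with i_1 ≠ i_2. Then for every circular convolution operator A ∈ 𝒜_2, the family Y = {e_i, A e_i, …, A^{N_A−1} e_i : i ∈ Ω} is a frame for ℓ²(ℤ_d) if and only if gcd(|i_1 − i_2|, d) = 1. -/

import Mathlib

open Matrix

/-- Unnormalized discrete Fourier transform of `a : ZMod d → ℂ`. -/
noncomputable def hatKer (d : ℕ) [NeZero d] (a : ZMod d → ℂ) : ZMod d → ℂ :=
  fun j => ∑ k : ZMod d,
    a k * Complex.exp (-(2 * (Real.pi : ℂ) * Complex.I) * ((j.val : ℂ) * (k.val : ℂ)) / (d : ℂ))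

/-- The circular convolution operator with kernel `a`, as a matrix. -/
def convMat (d : ℕ) (a : ZMod d → ℂ) : Matrix (ZMod d) (ZMod d) ℂ :=
  Matrix.of fun k i => a (k - i)

/-- The normalized discrete Fourier matrix `F_d`. -/
noncomputable def FdMat (d : ℕ) : Matrix (ZMod d) (ZMod d) ℂ :=
  Matrix.of fun j k =>
    ((Real.sqrt d : ℝ) : ℂ)⁻¹ *
      Complex.exp (-(2 * (Real.pi : ℂ) * Complex.I) * ((j.val : ℂ) * (k.val : ℂ)) / (d : ℂ))

/-- The largest geometric multiplicity of an eigenvalue of `diag b`, i.e. the size of the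
largest level set of `b`. -/
noncomputable def maxMult (d : ℕ) [NeZero d] (b : ZMod d → ℂ) : ℕ :=
  Finset.univ.sup fun j : ZMod d => Nat.card {t : ZMod d | b t = b j}

/-- The number of distinct eigenvalues of `diag b`. -/
noncomputable def numEig (d : ℕ) [NeZero d] (b : ZMod d → ℂ) : ℕ :=
  Nat.card (Set.range b)

set_option linter.unusedSectionVars false

namespace Stmt5Aux
variable (d : ℕ) [NeZero d]
noncomputable def zeta : ℂ := Complex.exp (-(2 * (Real.pi : ℂ) * Complex.I) / d)
lemma zeta_prim : IsPrimitiveRoot (zeta d) d := by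
  have h := Complex.isPrimitiveRoot_exp d (NeZero.ne d)
  have hz : zeta d = (Complex.exp (2 * (Real.pi:ℂ) * Complex.I / d))⁻¹ := by
    rw [← Complex.exp_neg, zeta, neg_div]
  rw [hz]; exact h.inv
lemma zeta_pow_d : zeta d ^ d = 1 := (zeta_prim d).pow_eq_one
lemma zeta_pow_mod (m : ℕ) : zeta d ^ m = zeta d ^ (m % d) := by
  conv_lhs => rw [← Nat.div_add_mod m d]
  rw [pow_add, pow_mul, zeta_pow_d, one_pow, one_mul]
lemma zeta_ne_zero : zeta d ≠ 0 := Complex.exp_ne_zero _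
noncomputable def chi (x : ZMod d) : ℂ := zeta d ^ x.val
lemma chi_zero : chi d 0 = 1 := by simp [chi]
lemma chi_add (x y : ZMod d) : chi d (x + y) = chi d x * chi d y := by
  rw [chi, chi, chi, ← pow_add, ZMod.val_add, ← zeta_pow_mod]
lemma chi_ne_zero (x : ZMod d) : chi d x ≠ 0 := pow_ne_zero _ (zeta_ne_zero d)
lemma chi_inj {x y : ZMod d} (h : chi d x = chi d y) : x = y :=
  ZMod.val_injective d ((zeta_prim d).pow_inj x.val_lt y.val_lt h)
lemma exp_eq_chi (j k : ZMod d) :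
    Complex.exp (-(2 * (Real.pi : ℂ) * Complex.I) * ((j.val : ℂ) * (k.val : ℂ)) / (d : ℂ))
      = chi d (j * k) := by
  have h1 : -(2 * (Real.pi : ℂ) * Complex.I) * ((j.val : ℂ) * (k.val : ℂ)) / (d : ℂ)
      = ((j.val * k.val : ℕ) : ℂ) * (-(2 * (Real.pi : ℂ) * Complex.I) / d) := by
    push_cast; ring
  rw [h1, Complex.exp_nat_mul, ← zeta, chi, ZMod.val_mul, ← zeta_pow_mod]

-- THE DFT as a linear map
noncomputable def dft : (ZMod d → ℂ) →ₗ[ℂ] (ZMod d → ℂ) where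
  toFun f := fun j => ∑ k, f k * chi d (j * k)
  map_add' f g := by funext j; simp [add_mul, Finset.sum_add_distrib]
  map_smul' c f := by funext j; simp [Finset.mul_sum, mul_assoc]

lemma hatKer_eq_dft (a : ZMod d → ℂ) : hatKer d a = dft d a := by
  funext j; simp only [hatKer, dft, LinearMap.coe_mk, AddHom.coe_mk]
  exact Finset.sum_congr rfl fun k _ => by rw [exp_eq_chi]

lemma sum_chi (m : ZMod d) : ∑ j : ZMod d, chi d (j * m) = if m = 0 then (d : ℂ) else 0 := by
  by_cases hm : m = 0
  · simp [hm, chi_zero]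
  · simp only [hm, if_false]
    have key : ∀ j : ZMod d, chi d (j * m) = (zeta d ^ m.val) ^ j.val := by
      intro j
      rw [chi, ZMod.val_mul, ← zeta_pow_mod, ← pow_mul, mul_comm m.val]
    simp only [key]
    have hre : ∑ j : ZMod d, (zeta d ^ m.val) ^ j.val
        = ∑ t ∈ Finset.range d, (zeta d ^ m.val) ^ t := by
      refine Finset.sum_nbij' (fun j => j.val) (fun t => (t : ZMod d)) ?_ ?_ ?_ ?_ ?_
      · intro j _; exact Finset.mem_range.mpr j.val_lt
      · intro t _; exact Finset.mem_univ _
      · intro j _; exact ZMod.natCast_zmod_val j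
      · intro t ht; exact ZMod.val_cast_of_lt (Finset.mem_range.mp ht)
      · intro j _; rfl
    rw [hre]
    have hw1 : zeta d ^ m.val ≠ 1 := by
      intro h
      have h0 : zeta d ^ m.val = zeta d ^ (0 : ℕ) := by simpa using h
      have := (zeta_prim d).pow_inj m.val_lt (Nat.pos_of_ne_zero (NeZero.ne d)) h0
      exact hm ((ZMod.val_eq_zero m).mp this)
    rw [geom_sum_eq hw1]
    have : (zeta d ^ m.val) ^ d = 1 := by
      rw [← pow_mul, mul_comm, pow_mul, zeta_pow_d, one_pow]
    rw [this]; simp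

noncomputable def dftInv (f : ZMod d → ℂ) : ZMod d → ℂ :=
  fun j => (d : ℂ)⁻¹ * ∑ k, f k * (chi d (j * k))⁻¹

lemma chi_div (x y k : ZMod d) : chi d (x * k) * (chi d (y * k))⁻¹ = chi d ((x - y) * k) := by
  have : chi d (y * k) * chi d ((x - y) * k) = chi d (x * k) := by
    rw [← chi_add]; ring_nf
  rw [← div_eq_mul_inv, div_eq_iff (chi_ne_zero d (y*k)), ← this]
  ring

lemma dft_dftInv (f : ZMod d → ℂ) : dft d (dftInv d f) = f := by
  funext j
  have hd : (d : ℂ) ≠ 0 := Nat.cast_ne_zero.mpr (NeZero.ne d)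
  simp only [dft, dftInv, LinearMap.coe_mk, AddHom.coe_mk]
  have h1 : ∀ k, ((d : ℂ)⁻¹ * ∑ l, f l * (chi d (k * l))⁻¹) * chi d (j * k)
      = ∑ l, (d : ℂ)⁻¹ * (f l * (chi d (j * k) * (chi d (l * k))⁻¹)) := by
    intro k
    rw [Finset.mul_sum, Finset.sum_mul]
    apply Finset.sum_congr rfl; intro l _
    have h2 : chi d (k * l) = chi d (l * k) := by rw [mul_comm]
    rw [h2]; ring
  simp only [h1]
  rw [Finset.sum_comm]
  have h2 : ∀ l, ∑ k, (d:ℂ)⁻¹ * (f l * (chi d (j * k) * (chi d (l * k))⁻¹))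
      = (d:ℂ)⁻¹ * (f l * (if j - l = 0 then (d:ℂ) else 0)) := by
    intro l
    simp only [← Finset.mul_sum]
    congr 2
    calc ∑ k, chi d (j * k) * (chi d (l * k))⁻¹ = ∑ k, chi d ((j - l) * k) := by
          apply Finset.sum_congr rfl; intro k _
          rw [chi_div]
      _ = ∑ k, chi d (k * (j - l)) := by
          apply Finset.sum_congr rfl; intro k _; rw [mul_comm]
      _ = _ := sum_chi d (j - l)
  simp only [h2]
  have h3 : ∀ x : ZMod d, ((d:ℂ)⁻¹ * (f x * if j - x = 0 then (d:ℂ) else 0))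
      = if x = j then (d:ℂ)⁻¹ * (f x * d) else 0 := by
    intro x
    by_cases hx : x = j
    · simp [hx]
    · have hne : j - x ≠ 0 := sub_ne_zero.mpr (Ne.symm hx)
      simp [hx, hne]
  simp only [h3]
  rw [Finset.sum_ite_eq' Finset.univ j (fun x => (d:ℂ)⁻¹ * (f x * d))]
  simp only [Finset.mem_univ, if_true]
  field_simp
lemma dft_surjective : Function.Surjective (dft d) :=
  fun f => ⟨dftInv d f, dft_dftInv d f⟩

lemma dft_injective : Function.Injective (dft d) :=
  (LinearMap.injective_iff_surjective).mpr (dft_surjective d)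

noncomputable def dftEquiv : (ZMod d → ℂ) ≃ₗ[ℂ] (ZMod d → ℂ) :=
  LinearEquiv.ofBijective (dft d) ⟨dft_injective d, dft_surjective d⟩

lemma dft_single (i : ZMod d) : dft d (Pi.single i 1) = fun j => chi d (j * i) := by
  funext j
  simp only [dft, LinearMap.coe_mk, AddHom.coe_mk]
  rw [Finset.sum_eq_single i]
  · simp
  · intro k _ hk; rw [Pi.single_eq_of_ne hk, zero_mul]
  · intro h; exact absurd (Finset.mem_univ i) h

lemma dft_mulVec (a f : ZMod d → ℂ) :
    dft d (convMat d a *ᵥ f) = fun j => hatKer d a j * dft d f j := by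
  funext j
  simp only [dft, LinearMap.coe_mk, AddHom.coe_mk, Matrix.mulVec, dotProduct,
    convMat, Matrix.of_apply]
  have h1 : ∀ k : ZMod d, (∑ m, a (k - m) * f m) * chi d (j * k)
      = ∑ m, f m * (a (k - m) * chi d (j * k)) := by
    intro k; rw [Finset.sum_mul]; apply Finset.sum_congr rfl; intro m _; ring
  simp only [h1]
  rw [Finset.sum_comm]
  have h2 : ∀ m : ZMod d, ∑ k, f m * (a (k - m) * chi d (j * k))
      = f m * chi d (j * m) * hatKer d a j := by
    intro m
    rw [hatKer_eq_dft]
    simp only [dft, LinearMap.coe_mk, AddHom.coe_mk]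
    rw [mul_assoc, Finset.mul_sum, Finset.mul_sum]
    refine Finset.sum_nbij' (fun k => k - m) (fun t => t + m) (fun k _ => Finset.mem_univ _)
      (fun t _ => Finset.mem_univ _) (fun k _ => by ring) (fun t _ => by ring) ?_
    intro k _
    have hc : chi d (j * k) = chi d (j * m) * chi d (j * (k - m)) := by
      rw [← chi_add]; ring_nf
    rw [hc]; ring
  simp only [h2]
  rw [← Finset.sum_mul, mul_comm]

lemma dft_pow_single (a : ZMod d → ℂ) (i : ZMod d) (n : ℕ) :
    dft d ((convMat d a) ^ n *ᵥ (Pi.single i 1 : ZMod d → ℂ))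
      = fun j => (hatKer d a j) ^ n * chi d (j * i) := by
  induction n with
  | zero => simp only [pow_zero, Matrix.one_mulVec, one_mul]; exact dft_single d i
  | succ n ih =>
    have : (convMat d a) ^ (n+1) *ᵥ (Pi.single i 1 : ZMod d → ℂ)
        = convMat d a *ᵥ ((convMat d a) ^ n *ᵥ (Pi.single i 1 : ZMod d → ℂ)) := by
      rw [Matrix.mulVec_mulVec, ← pow_succ']
    rw [this, dft_mulVec, ih]
    funext j; simp [pow_succ]; ring
lemma pi_single_mem_span (b : ZMod d → ℂ) (i₁ i₂ : ZMod d)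
    (hmax : ∀ j : ZMod d, Nat.card {t : ZMod d | b t = b j} ≤ 2)
    (hunit : IsUnit (i₁ - i₂)) (j₀ : ZMod d) :
    (Pi.single j₀ 1 : ZMod d → ℂ) ∈ Submodule.span ℂ
      {w : ZMod d → ℂ | ∃ i : ZMod d, (i = i₁ ∨ i = i₂) ∧
        ∃ n < Nat.card (Set.range b), w = fun j => b j ^ n * chi d (j * i)} := by
  set N := Nat.card (Set.range b) with hNdef
  set M := {w : ZMod d → ℂ | ∃ i : ZMod d, (i = i₁ ∨ i = i₂) ∧
        ∃ n < N, w = fun j => b j ^ n * chi d (j * i)} with hMdef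
  have hN0 : 0 < N := by
    haveI : Finite (Set.range b) := (Set.finite_range b).to_subtype
    haveI : Nonempty (Set.range b) := (Set.range_nonempty b).to_subtype
    exact Nat.card_pos
  -- Step A: polynomial combinations lie in the span
  have hstep : ∀ (p : Polynomial ℂ), p.natDegree < N → ∀ i : ZMod d, (i = i₁ ∨ i = i₂) →
      (fun j => Polynomial.eval (b j) p * chi d (j * i)) ∈ Submodule.span ℂ M := by
    intro p hp i hi
    have hrepr : (fun j => Polynomial.eval (b j) p * chi d (j * i))
        = ∑ n ∈ Finset.range N, p.coeff n • (fun j => b j ^ n * chi d (j * i)) := by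
      funext j
      rw [Finset.sum_apply, Polynomial.eval_eq_sum_range' hp, Finset.sum_mul]
      apply Finset.sum_congr rfl; intro n _
      simp only [Pi.smul_apply, smul_eq_mul]; ring
    rw [hrepr]
    exact Submodule.sum_mem _ fun n hn => Submodule.smul_mem _ _
      (Submodule.subset_span ⟨i, hi, n, Finset.mem_range.mp hn, rfl⟩)
  -- Step B: the interpolating polynomial
  have hVcard : (Finset.image b Finset.univ).card = N := by
    rw [hNdef]
    have : Set.range b = ↑(Finset.image b Finset.univ) := by
      rw [Finset.coe_image, Finset.coe_univ, Set.image_univ]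
    rw [this, Nat.card_coe_set_eq, Set.ncard_coe_finset]
  obtain ⟨p, hpdeg, hpval⟩ : ∃ p : Polynomial ℂ, p.natDegree < N ∧
      ∀ j : ZMod d, Polynomial.eval (b j) p = if b j = b j₀ then 1 else 0 := by
    refine ⟨Lagrange.interpolate (Finset.image b Finset.univ) id
      (fun x => if x = b j₀ then 1 else 0), ?_, ?_⟩
    · have hdeg := Lagrange.degree_interpolate_lt (s := Finset.image b Finset.univ)
        (r := fun x => if x = b j₀ then 1 else 0) (Set.injOn_id _)
      by_cases hp0 : Lagrange.interpolate (Finset.image b Finset.univ) id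
          (fun x => if x = b j₀ then 1 else 0) = 0
      · rw [hp0]; simpa using hN0
      · rw [← hVcard]
        exact (Polynomial.natDegree_lt_iff_degree_lt hp0).mpr (by exact_mod_cast hdeg)
    · intro j
      have := Lagrange.eval_interpolate_at_node (s := Finset.image b Finset.univ)
        (r := fun x => if x = b j₀ then 1 else 0) (Set.injOn_id _)
        (Finset.mem_image_of_mem b (Finset.mem_univ j))
      simpa using this
  -- Step C: level set analysis
  set Lf := Finset.univ.filter (fun t => b t = b j₀) with hLfdef
  have hmem : ∀ t, t ∈ Lf ↔ b t = b j₀ := fun t => by simp [hLfdef]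
  have hj₀ : j₀ ∈ Lf := (hmem j₀).mpr rfl
  have hcard2 : Lf.card ≤ 2 := by
    have h := hmax j₀
    have hset : {t : ZMod d | b t = b j₀} = ↑Lf := by ext t; simp [hLfdef]
    rwa [hset, Nat.card_coe_set_eq, Set.ncard_coe_finset] at h
  have hcases : Lf.card = 1 ∨ Lf.card = 2 := by
    have : 1 ≤ Lf.card := Finset.card_pos.mpr ⟨j₀, hj₀⟩
    omega
  rcases hcases with h1 | h2
  · -- singleton level set
    obtain ⟨x, hx⟩ := Finset.card_eq_one.mp h1
    have honly : ∀ j, b j = b j₀ → j = j₀ := by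
      intro j hj
      have hjx : j ∈ Lf := (hmem j).mpr hj
      have hj₀x : j₀ ∈ Lf := hj₀
      rw [hx, Finset.mem_singleton] at hjx hj₀x
      rw [hjx, ← hj₀x]
    have hvec : (fun j => Polynomial.eval (b j) p * chi d (j * i₁))
        = chi d (j₀ * i₁) • (Pi.single j₀ 1 : ZMod d → ℂ) := by
      funext j
      simp only [Pi.smul_apply, smul_eq_mul]
      by_cases hj : b j = b j₀
      · have hjj := honly j hj; subst hjj
        rw [hpval, if_pos hj, Pi.single_eq_same]; ring
      · have hjne : j ≠ j₀ := fun h => hj (by rw [h])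
        rw [hpval, if_neg hj, Pi.single_eq_of_ne hjne]; ring
    have hv := hstep p hpdeg i₁ (Or.inl rfl)
    rw [hvec] at hv
    have hv2 := Submodule.smul_mem _ (chi d (j₀ * i₁))⁻¹ hv
    rwa [smul_smul, inv_mul_cancel₀ (chi_ne_zero _ _), one_smul] at hv2
  · -- level set of size two
    obtain ⟨x, y, hxy, hset⟩ := Finset.card_eq_two.mp h2
    have hj₀' : j₀ = x ∨ j₀ = y := by
      have := hj₀; rw [hset] at this; simpa using this
    obtain ⟨j₁, hj₁ne, hLpair⟩ : ∃ j₁, j₁ ≠ j₀ ∧ Lf = {j₀, j₁} := by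
      rcases hj₀' with h | h
      · exact ⟨y, by rw [h]; exact hxy.symm, by rw [hset, h]⟩
      · exact ⟨x, by rw [h]; exact hxy, by rw [hset, h, Finset.pair_comm]⟩
    have hb₁ : b j₁ = b j₀ := (hmem j₁).mp (by rw [hLpair]; simp)
    have honly : ∀ j, b j = b j₀ → j = j₀ ∨ j = j₁ := by
      intro j hj
      have : j ∈ Lf := (hmem j).mpr hj
      rw [hLpair] at this; simpa using this
    set D := chi d (j₀ * i₁) * chi d (j₁ * i₂) - chi d (j₁ * i₁) * chi d (j₀ * i₂) with hDdef
    have hDne : D ≠ 0 := by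
      intro h0
      have h1 : chi d (j₀ * i₁ + j₁ * i₂) = chi d (j₁ * i₁ + j₀ * i₂) := by
        rw [chi_add, chi_add]
        rw [hDdef] at h0
        exact sub_eq_zero.mp h0
      have h2 : j₀ * i₁ + j₁ * i₂ = j₁ * i₁ + j₀ * i₂ := chi_inj d h1
      have h3 : (j₀ - j₁) * (i₁ - i₂) = 0 := by linear_combination h2
      have h4 : j₀ - j₁ = 0 := (IsUnit.mul_left_eq_zero hunit).mp h3
      exact hj₁ne (sub_eq_zero.mp h4).symm
    have hv1 := hstep p hpdeg i₁ (Or.inl rfl)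
    have hv2 := hstep p hpdeg i₂ (Or.inr rfl)
    have key : (Pi.single j₀ 1 : ZMod d → ℂ)
        = (chi d (j₁ * i₂) / D) • (fun j => Polynomial.eval (b j) p * chi d (j * i₁))
          + (-(chi d (j₁ * i₁)) / D) • (fun j => Polynomial.eval (b j) p * chi d (j * i₂)) := by
      funext j
      simp only [Pi.add_apply, Pi.smul_apply, smul_eq_mul]
      by_cases hj : b j = b j₀
      · rcases honly j hj with rfl | rfl
        · rw [hpval, if_pos hj, Pi.single_eq_same]
          field_simp
          rw [hDdef]; ring
        · rw [hpval, if_pos hj, Pi.single_eq_of_ne hj₁ne]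
          field_simp
          ring
      · have hjne : j ≠ j₀ := fun h => hj (by rw [h])
        rw [hpval, if_neg hj, Pi.single_eq_of_ne hjne]; ring
    rw [key]
    exact Submodule.add_mem _ (Submodule.smul_mem _ _ hv1) (Submodule.smul_mem _ _ hv2)
lemma sum_single_repr (f : ZMod d → ℂ) : f = ∑ j, f j • (Pi.single j 1 : ZMod d → ℂ) := by
  funext k
  rw [Finset.sum_apply]
  have h : ∀ j : ZMod d, (f j • (Pi.single j 1 : ZMod d → ℂ)) k = if k = j then f k else 0 := by
    intro j
    by_cases h : k = j
    · subst h; simp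
    · simp [Pi.single_eq_of_ne h, h]
  simp only [h, Finset.sum_ite_eq, Finset.mem_univ, if_true]

lemma forward_aux (i₁ i₂ : ZMod d) (hne : i₁ ≠ i₂)
    (hg : Nat.gcd (i₁ - i₂).val d ≠ 1)
    (H : ∀ a : ZMod d → ℂ, maxMult d (hatKer d a) = 2 →
      Submodule.span ℂ {v : ZMod d → ℂ | ∃ i : ZMod d, (i = i₁ ∨ i = i₂) ∧
          ∃ n < numEig d (hatKer d a),
          v = (convMat d a) ^ n *ᵥ (Pi.single i 1 : ZMod d → ℂ)} = ⊤) : False := by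
  set m := (i₁ - i₂).val with hm
  set g := Nat.gcd m d with hgdef
  have hd0 : d ≠ 0 := NeZero.ne d
  have hm0 : m ≠ 0 := fun h => hne (sub_eq_zero.mp ((ZMod.val_eq_zero _).mp h))
  have hg0 : 0 < g := Nat.gcd_pos_of_pos_right m (Nat.pos_of_ne_zero hd0)
  have hg2 : 2 ≤ g := by omega
  have hgd : g ∣ d := Nat.gcd_dvd_right m d
  have hgm : g ∣ m := Nat.gcd_dvd_left m d
  have hδlt : d / g < d := Nat.div_lt_self (Nat.pos_of_ne_zero hd0) hg2
  have hδpos : 0 < d / g := Nat.div_pos (Nat.le_of_dvd (Nat.pos_of_ne_zero hd0) hgd) hg0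
  set δ : ZMod d := ((d / g : ℕ) : ZMod d) with hδdef
  have hδval : δ.val = d / g := ZMod.val_cast_of_lt hδlt
  have hδ0 : δ ≠ 0 := fun h => by rw [h, ZMod.val_zero] at hδval; omega
  -- (i₁ - i₂) * δ = 0
  have hmul : (i₁ - i₂) * δ = 0 := by
    have hz : ((m * (d / g) : ℕ) : ZMod d) = 0 := by
      rw [ZMod.natCast_eq_zero_iff]
      obtain ⟨m', hm'⟩ := hgm
      refine ⟨m', ?_⟩
      calc m * (d / g) = m' * (g * (d / g)) := by rw [hm']; ring
        _ = m' * d := by rw [Nat.mul_div_cancel' hgd]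
        _ = d * m' := by ring
    have hcast : ((m : ℕ) : ZMod d) = i₁ - i₂ := ZMod.natCast_zmod_val _
    calc (i₁ - i₂) * δ = ((m : ℕ) : ZMod d) * ((d / g : ℕ) : ZMod d) := by rw [hcast]
      _ = ((m * (d / g) : ℕ) : ZMod d) := by push_cast; ring
      _ = 0 := hz
  have hδi : δ * i₁ = δ * i₂ := by linear_combination hmul
  -- the kernel b₀, with level set {0, δ}
  set b₀ : ZMod d → ℂ := fun j => if j = δ then 0 else (j.val : ℂ) with hb₀
  have hb00 : b₀ 0 = 0 := by
    by_cases h : (0 : ZMod d) = δ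
    · simp [hb₀, h]
    · simp [hb₀, h]
  have hb0δ : b₀ δ = 0 := by simp [hb₀]
  have hlev0 : {t : ZMod d | b₀ t = b₀ 0} = {0, δ} := by
    ext t
    simp only [Set.mem_setOf_eq, hb00, Set.mem_insert_iff, Set.mem_singleton_iff]
    constructor
    · intro ht
      by_cases h : t = δ
      · exact Or.inr h
      · left
        rw [hb₀] at ht
        simp only [h, if_false] at ht
        exact (ZMod.val_eq_zero t).mp (Nat.cast_eq_zero.mp ht)
    · rintro (rfl | rfl)
      · exact hb00
      · exact hb0δ
  have hlevj : ∀ j : ZMod d, j ≠ 0 → j ≠ δ → {t : ZMod d | b₀ t = b₀ j} = {j} := by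
    intro j hj0 hjδ
    ext t
    simp only [Set.mem_setOf_eq, Set.mem_singleton_iff]
    constructor
    · intro ht
      rw [hb₀] at ht
      simp only [hjδ, if_false] at ht
      by_cases h : t = δ
      · simp only [h, if_pos rfl] at ht
        exact absurd ((ZMod.val_eq_zero j).mp (Nat.cast_eq_zero.mp ht.symm)) hj0
      · simp only [h, if_false] at ht
        exact ZMod.val_injective d (Nat.cast_injective ht)  -- keep
    · rintro rfl; rfl
  have hmax : maxMult d b₀ = 2 := by
    have hcard : ∀ j : ZMod d, Nat.card {t : ZMod d | b₀ t = b₀ j} ≤ 2 := by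
      intro j
      by_cases hj0 : j = 0
      · subst hj0
        rw [hlev0, Nat.card_coe_set_eq, Set.ncard_pair (Ne.symm hδ0)]
      · by_cases hjδ : j = δ
        · subst hjδ
          have : b₀ δ = b₀ 0 := by rw [hb00, hb0δ]
          have hsame : {t : ZMod d | b₀ t = b₀ δ} = {t : ZMod d | b₀ t = b₀ 0} := by
            rw [this]
          rw [hsame, hlev0, Nat.card_coe_set_eq, Set.ncard_pair (Ne.symm hδ0)]
        · rw [hlevj j hj0 hjδ, Nat.card_coe_set_eq, Set.ncard_singleton]
          omega
    unfold maxMult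
    apply le_antisymm
    · exact Finset.sup_le fun j _ => hcard j
    · have h0 : Nat.card {t : ZMod d | b₀ t = b₀ 0} = 2 := by
        rw [hlev0, Nat.card_coe_set_eq, Set.ncard_pair (Ne.symm hδ0)]
      calc 2 = Nat.card {t : ZMod d | b₀ t = b₀ 0} := h0.symm
        _ ≤ _ := Finset.le_sup (f := fun j : ZMod d => Nat.card {t : ZMod d | b₀ t = b₀ j})
          (Finset.mem_univ 0)
  -- the counterexample operator
  set a : ZMod d → ℂ := dftInv d b₀ with ha
  have hhat : hatKer d a = b₀ := by rw [hatKer_eq_dft]; exact dft_dftInv d b₀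
  have hspan := H a (by rw [hhat]; exact hmax)
  -- the annihilating functional
  set φ : (ZMod d → ℂ) →ₗ[ℂ] ℂ :=
    chi d (δ * i₁) • ((LinearMap.proj 0).comp (dft d)) - (LinearMap.proj δ).comp (dft d) with hφ
  have hφapply : ∀ f, φ f = chi d (δ * i₁) * dft d f 0 - dft d f δ := by
    intro f; simp [hφ]
  have hker : Submodule.span ℂ {v : ZMod d → ℂ | ∃ i : ZMod d, (i = i₁ ∨ i = i₂) ∧
      ∃ n < numEig d (hatKer d a),
      v = (convMat d a) ^ n *ᵥ (Pi.single i 1 : ZMod d → ℂ)} ≤ LinearMap.ker φ := by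
    rw [Submodule.span_le]
    rintro v ⟨i, hi, n, hn, rfl⟩
    rw [SetLike.mem_coe, LinearMap.mem_ker, hφapply, dft_pow_single, hhat]
    have hδiᵢ : δ * i = δ * i₁ := by
      rcases hi with rfl | rfl
      · rfl
      · exact hδi.symm
    simp only [zero_mul, chi_zero, mul_one, hb00, hb0δ, hδiᵢ]
    ring
  have hcontr : φ (Pi.single (i₁ + 1) 1) = 0 := by
    have : (Pi.single (i₁ + 1) 1 : ZMod d → ℂ) ∈ LinearMap.ker φ :=
      hker (hspan ▸ Submodule.mem_top)
    exact LinearMap.mem_ker.mp this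
  rw [hφapply, dft_single] at hcontr
  simp only [zero_mul, chi_zero, mul_one] at hcontr
  have hne' : chi d (δ * i₁) ≠ chi d (δ * (i₁ + 1)) := by
    intro h
    have := chi_inj d h
    have hδδ : δ * i₁ + δ = δ * i₁ := by linear_combination this.symm
    exact hδ0 (by linear_combination hδδ)
  exact hne' (by linear_combination hcontr)

end Stmt5Aux

/-- for `Ω = {i₁, i₂}` with `i₁ ≠ i₂`, the family
`Y = {A^n e_i : i ∈ Ω, n ≤ N_A - 1}` is a frame for every circular convolution operator
`A ∈ 𝒜_2` iff `gcd(|i₁ - i₂|, d) = 1`. -/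
theorem stmt5 (d : ℕ) [NeZero d] (i₁ i₂ : ZMod d) (hne : i₁ ≠ i₂) :
    (∀ a : ZMod d → ℂ, maxMult d (hatKer d a) = 2 →
      Submodule.span ℂ {v : ZMod d → ℂ | ∃ i : ZMod d, (i = i₁ ∨ i = i₂) ∧
          ∃ n < numEig d (hatKer d a),
          v = (convMat d a) ^ n *ᵥ (Pi.single i 1 : ZMod d → ℂ)} = ⊤)
    ↔ Nat.gcd (i₁ - i₂).val d = 1 := by
  constructor
  · intro H
    by_contra hg
    exact Stmt5Aux.forward_aux d i₁ i₂ hne hg H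
  · intro hg a hmax2
    set b := hatKer d a with hb
    have hunit : IsUnit (i₁ - i₂) := by
      have h := (ZMod.isUnit_iff_coprime (i₁ - i₂).val d).mpr hg
      rwa [ZMod.natCast_zmod_val] at h
    have hmaxle : ∀ j : ZMod d, Nat.card {t : ZMod d | b t = b j} ≤ 2 := by
      intro j
      have h := Finset.le_sup (f := fun j : ZMod d => Nat.card {t : ZMod d | b t = b j})
        (Finset.mem_univ j)
      exact le_trans h (le_of_eq hmax2)
    set G := {v : ZMod d → ℂ | ∃ i : ZMod d, (i = i₁ ∨ i = i₂) ∧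
          ∃ n < numEig d (hatKer d a),
          v = (convMat d a) ^ n *ᵥ (Pi.single i 1 : ZMod d → ℂ)} with hG
    have himg : ⇑(Stmt5Aux.dftEquiv d) '' G =
        {w : ZMod d → ℂ | ∃ i : ZMod d, (i = i₁ ∨ i = i₂) ∧
          ∃ n < Nat.card (Set.range b), w = fun j => b j ^ n * Stmt5Aux.chi d (j * i)} := by
      ext w
      constructor
      · rintro ⟨v, ⟨i, hi, n, hn, rfl⟩, rfl⟩
        exact ⟨i, hi, n, hn, Stmt5Aux.dft_pow_single d a i n⟩
      · rintro ⟨i, hi, n, hn, rfl⟩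
        exact ⟨(convMat d a) ^ n *ᵥ (Pi.single i 1 : ZMod d → ℂ), ⟨i, hi, n, hn, rfl⟩,
          Stmt5Aux.dft_pow_single d a i n⟩
    have hspan' : Submodule.span ℂ (⇑(Stmt5Aux.dftEquiv d) '' G) = ⊤ := by
      rw [himg, eq_top_iff]
      intro f _
      rw [Stmt5Aux.sum_single_repr d f]
      exact Submodule.sum_mem _ fun j _ => Submodule.smul_mem _ _
        (Stmt5Aux.pi_single_mem_span d b i₁ i₂ hmaxle hunit j)
    have hmap : Submodule.map (Stmt5Aux.dftEquiv d).toLinearMap (Submodule.span ℂ G) = ⊤ := by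
      rw [← Submodule.span_image]
      exact hspan'
    have htop : Submodule.map (Stmt5Aux.dftEquiv d).toLinearMap
        (⊤ : Submodule ℂ (ZMod d → ℂ)) = ⊤ := by
      rw [Submodule.map_top, LinearMap.range_eq_top]
      exact (Stmt5Aux.dftEquiv d).surjective
    exact Submodule.map_injective_of_injective ((Stmt5Aux.dftEquiv d).injective)
      (by rw [hmap, htop])
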